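/- arXiv:1512.06564 — 2 statements merged into one kernel-verified Lean document; each statement's English description precedes it below -/
import Mathlib

section
/- Let P be a polyhedron in R^d in general position with bounding half-spaces H_1,...,H_n, and let J be an element of the abstract simplicial complex 𝓕 of P. Then for every point x in the affine subspace V(J, ã, b̃) = {x ∈ ℝ^d : f_j(ã, b̃, x) = 0 for all j ∈ J}, the following identity holds: ∏_{j ∈ {1,...,n} \ J} H(f_j(ã, b̃, x)) = ∑_{F ∈ 𝓕_J} ∏_{j ∈ F \ J} (H(f_j(ã, b̃, x)) − 1), where 𝓕_J = {F ∈ 𝓕 : J ⊆ F}. -/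
open MeasureTheory Real

noncomputable section

/-- Heaviside function: `H(t) = 1` for `t ≥ 0` and `H(t) = 0` for `t < 0`. -/
def Hv (t : ℝ) : ℝ := if 0 ≤ t then 1 else 0

/-- `f_j(a,b,x) = ∑_i a_{ij} x_i + b_j`. -/
def lf {d n : ℕ} (a : Matrix (Fin d) (Fin n) ℝ) (b : Fin n → ℝ) (j : Fin n)
    (x : EuclideanSpace ℝ (Fin d)) : ℝ :=
  (∑ i, a i j * x i) + b j

/-- The polyhedron `P(a,b) = {x | f_j(a,b,x) ≥ 0 for all j}`. -/
def poly {d n : ℕ} (a : Matrix (Fin d) (Fin n) ℝ) (b : Fin n → ℝ) :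
    Set (EuclideanSpace ℝ (Fin d)) :=
  {x | ∀ j, 0 ≤ lf a b j x}

/-- The face `F_j(a,b) = P(a,b) ∩ {x | f_j(a,b,x) = 0}`. -/
def face {d n : ℕ} (a : Matrix (Fin d) (Fin n) ℝ) (b : Fin n → ℝ) (j : Fin n) :
    Set (EuclideanSpace ℝ (Fin d)) :=
  {x ∈ poly a b | lf a b j x = 0}

/-- The affine subspace `V(J,a,b) = {x | f_j(a,b,x) = 0 for all j ∈ J}`. -/
def VJ {d n : ℕ} (J : Finset (Fin n)) (a : Matrix (Fin d) (Fin n) ℝ) (b : Fin n → ℝ) :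
    Set (EuclideanSpace ℝ (Fin d)) :=
  {x | ∀ j ∈ J, lf a b j x = 0}

/-- `J` belongs to the abstract simplicial complex `𝓕(a,b)`, i.e. `⋂_{j∈J} F_j(a,b) ≠ ∅`. -/
def inComplex {d n : ℕ} (a : Matrix (Fin d) (Fin n) ℝ) (b : Fin n → ℝ)
    (J : Finset (Fin n)) : Prop :=
  (⋂ j ∈ J, face a b j).Nonempty

/-- The polyhedron `P(a,b)` is in general position: whenever the faces indexed by `J`
have a common point, the corresponding columns of `a` are linearly independent. -/
def GeneralPosition {d n : ℕ} (a : Matrix (Fin d) (Fin n) ℝ) (b : Fin n → ℝ) : Prop :=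
  ∀ J : Finset (Fin n), inComplex a b J →
    LinearIndependent ℝ (fun j : J => fun i : Fin d => a i (j : Fin n))

/-- `H_j` is a bounding half-space of `P(a,b)`, i.e. `F_j` is a facet: there is a point
where exactly the `j`-th constraint is active. -/
def IsBoundingFacet {d n : ℕ} (a : Matrix (Fin d) (Fin n) ℝ) (b : Fin n → ℝ)
    (j : Fin n) : Prop :=
  ∃ x : EuclideanSpace ℝ (Fin d), lf a b j x = 0 ∧ ∀ k, k ≠ j → 0 < lf a b k x

/-- Determinant of the Gram matrix `α_J(a) = (∑_k a_{ki} a_{kj})_{i,j ∈ J}`. -/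
def gramDet {d n : ℕ} (a : Matrix (Fin d) (Fin n) ℝ) (J : Finset (Fin n)) : ℝ :=
  Matrix.det (Matrix.of fun i j : J => ∑ k, a k (i : Fin n) * a k (j : Fin n))

/-- `φ_F(a,b) = ∫_{ℝ^d} exp(-|x|²/2) ∏_{j∈F} H(-f_j(a,b,x)) dx`. -/
def phiF {d n : ℕ} (F : Finset (Fin n)) (a : Matrix (Fin d) (Fin n) ℝ)
    (b : Fin n → ℝ) : ℝ :=
  ∫ x : EuclideanSpace ℝ (Fin d),
    Real.exp (-(1 / 2) * ∑ i, x i ^ 2) * ∏ j ∈ F, Hv (-(lf a b j x))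

/-- `φ(a,b)` for a fixed abstract simplicial complex `𝓕`. -/
def phiC {d n : ℕ} (𝓕 : Finset (Finset (Fin n))) (a : Matrix (Fin d) (Fin n) ℝ)
    (b : Fin n → ℝ) : ℝ :=
  (2 * π) ^ (-(d : ℝ) / 2) *
    ∫ x : EuclideanSpace ℝ (Fin d),
      Real.exp (-(1 / 2) * ∑ i, x i ^ 2) *
        ∑ F ∈ 𝓕, ∏ j ∈ F, (Hv (lf a b j x) - 1)

/-- `IsMixedPartialOn S L f g` : on the set `S`, the iterated partial derivative of `f`
with respect to the variables listed in `L` exists and is given by `g`. -/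
def IsMixedPartialOn {n : ℕ} (S : Set (Fin n → ℝ)) :
    List (Fin n) → ((Fin n → ℝ) → ℝ) → ((Fin n → ℝ) → ℝ) → Prop
  | [], f, g => ∀ b ∈ S, g b = f b
  | j :: L, f, g => ∃ h : (Fin n → ℝ) → ℝ, IsMixedPartialOn S L f h ∧
      ∀ b ∈ S, HasDerivAt (fun t => h (Function.update b j t)) (g b) (b j)


namespace Stmt0Aux

open Finset

variable {d n : ℕ}

lemma hv_sub_one (t : ℝ) : Hv t - 1 = if t < 0 then (-1 : ℝ) else 0 := by
  by_cases h : 0 ≤ t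
  · simp [Hv, h, not_lt.mpr h]
  · simp [Hv, h, not_le.mp h]

lemma prod_hv_sub_one (f : Fin n → ℝ) (F : Finset (Fin n)) :
    ∏ j ∈ F, (Hv (f j) - 1) = if ∀ j ∈ F, f j < 0 then (-1 : ℝ) ^ F.card else 0 := by
  by_cases h : ∀ j ∈ F, f j < 0
  · rw [if_pos h, Finset.prod_congr rfl (fun j hj => by rw [hv_sub_one, if_pos (h j hj)]),
      Finset.prod_const]
  · rw [if_neg h]
    push_neg at h
    obtain ⟨j, hj, hge⟩ := h
    exact Finset.prod_eq_zero hj (by rw [hv_sub_one, if_neg (not_lt.mpr hge)])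

lemma prod_hv (f : Fin n → ℝ) (F : Finset (Fin n)) :
    ∏ j ∈ F, Hv (f j) = if ∀ j ∈ F, 0 ≤ f j then (1 : ℝ) else 0 := by
  by_cases h : ∀ j ∈ F, 0 ≤ f j
  · rw [if_pos h, Finset.prod_congr rfl (fun j hj => by rw [Hv, if_pos (h j hj)]),
      Finset.prod_const, one_pow]
  · rw [if_neg h]
    push_neg at h
    obtain ⟨j, hj, hlt⟩ := h
    exact Finset.prod_eq_zero hj (by rw [Hv, if_neg (not_le.mpr hlt)])

lemma lf_comb (a : Matrix (Fin d) (Fin n) ℝ) (b : Fin n → ℝ) (j : Fin n)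
    (x y : EuclideanSpace ℝ (Fin d)) (s t : ℝ) (hst : s + t = 1) :
    lf a b j (s • x + t • y) = s * lf a b j x + t * lf a b j y := by
  unfold lf
  have hpt : ∀ i, (s • x + t • y) i = s * x i + t * y i := by
    intro i
    simp [PiLp.add_apply, PiLp.smul_apply, smul_eq_mul]
  have h1 : ∑ i, a i j * (s • x + t • y) i
      = s * (∑ i, a i j * x i) + t * (∑ i, a i j * y i) := by
    simp_rw [hpt]
    rw [Finset.mul_sum, Finset.mul_sum, ← Finset.sum_add_distrib]
    exact Finset.sum_congr rfl fun i _ => by ring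
  rw [h1]
  linear_combination (-(b j)) * hst

lemma lf_add_smul (a : Matrix (Fin d) (Fin n) ℝ) (b : Fin n → ℝ) (j : Fin n)
    (w v : EuclideanSpace ℝ (Fin d)) (t : ℝ) :
    lf a b j (w + t • v) = lf a b j w + t * ∑ i, a i j * v i := by
  unfold lf
  have hpt : ∀ i, (w + t • v) i = w i + t * v i := by
    intro i
    simp [PiLp.add_apply, PiLp.smul_apply, smul_eq_mul]
  simp_rw [hpt]
  rw [Finset.mul_sum]
  rw [show ∑ i, a i j * (w i + t * v i) = ∑ i, (a i j * w i + t * (a i j * v i)) from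
    Finset.sum_congr rfl fun i _ => by ring]
  rw [Finset.sum_add_distrib]
  ring

lemma mem_inComplex_witness {a : Matrix (Fin d) (Fin n) ℝ} {b : Fin n → ℝ}
    {F : Finset (Fin n)} (w : EuclideanSpace ℝ (Fin d)) (hw : w ∈ poly a b)
    (h0 : ∀ j ∈ F, lf a b j w = 0) : inComplex a b F :=
  ⟨w, Set.mem_iInter₂.mpr fun j hj => ⟨hw, h0 j hj⟩⟩

lemma witness_of_inComplex {a : Matrix (Fin d) (Fin n) ℝ} {b : Fin n → ℝ}
    {F : Finset (Fin n)} (hne : F.Nonempty) (h : inComplex a b F) :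
    ∃ w, w ∈ poly a b ∧ ∀ j ∈ F, lf a b j w = 0 := by
  obtain ⟨w, hw⟩ := h
  rw [Set.mem_iInter₂] at hw
  obtain ⟨j0, hj0⟩ := hne
  exact ⟨w, (hw j0 hj0).1, fun j hj => (hw j hj).2⟩

lemma inComplex_mono {a : Matrix (Fin d) (Fin n) ℝ} {b : Fin n → ℝ}
    {F F' : Finset (Fin n)} (h : F' ⊆ F) : inComplex a b F → inComplex a b F' := by
  rintro ⟨w, hw⟩
  rw [Set.mem_iInter₂] at hw
  exact ⟨w, Set.mem_iInter₂.mpr fun j hj => hw j (h hj)⟩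


variable {d n : ℕ}

/-- prescription lemma: for linearly independent `u`, any values can be achieved by dot
products. -/
lemma exists_dot_eq {ι : Type*} [Fintype ι] (u : ι → (Fin d → ℝ))
    (hu : LinearIndependent ℝ u) (c : ι → ℝ) :
    ∃ v : EuclideanSpace ℝ (Fin d), ∀ i, ∑ k, u i k * v k = c i := by
  classical
  let T : EuclideanSpace ℝ (Fin d) →ₗ[ℝ] (ι → ℝ) :=
    { toFun := fun v i => ∑ k, u i k * v k
      map_add' := by
        intro v w
        funext i
        simp only [PiLp.add_apply, Pi.add_apply, mul_add]
        rw [Finset.sum_add_distrib]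
      map_smul' := by
        intro r v
        funext i
        simp only [PiLp.smul_apply, smul_eq_mul, RingHom.id_apply, Pi.smul_apply,
          Finset.mul_sum]
        exact Finset.sum_congr rfl fun k _ => by ring }
  suffices hs : Function.Surjective T by
    obtain ⟨v, hv⟩ := hs c
    exact ⟨v, fun i => congrFun hv i⟩
  rw [← LinearMap.range_eq_top]
  by_contra hne
  obtain ⟨f, hf0, hker⟩ := Submodule.exists_dual_map_eq_bot_of_lt_top
    (lt_top_iff_ne_top.mpr hne) inferInstance
  set lam : ι → ℝ := fun i => f (fun j => if i = j then 1 else 0) with hlam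
  have hfw : ∀ w : ι → ℝ, f w = ∑ i, w i * lam i := by
    intro w
    rw [LinearMap.pi_apply_eq_sum_univ f w]
    exact Finset.sum_congr rfl fun i _ => by rw [smul_eq_mul]
  have hzero : ∀ v : EuclideanSpace ℝ (Fin d), ∑ i, (∑ k, u i k * v k) * lam i = 0 := by
    intro v
    have h1 : f (T v) ∈ Submodule.map f (LinearMap.range T) :=
      Submodule.mem_map_of_mem (LinearMap.mem_range_self T v)
    rw [hker, Submodule.mem_bot] at h1
    calc ∑ i, (∑ k, u i k * v k) * lam i = f (T v) := (hfw (T v)).symm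
    _ = 0 := h1
  have hcol : ∀ k, ∑ i, lam i * u i k = 0 := by
    intro k
    have h := hzero (EuclideanSpace.single k 1)
    have h2 : ∀ i, ∑ k', u i k' * (EuclideanSpace.single k (1:ℝ)) k' = u i k := by
      intro i
      rw [Finset.sum_eq_single k]
      · simp [EuclideanSpace.single_apply]
      · intro k' _ hk'
        simp [EuclideanSpace.single_apply, hk']
      · simp
    rw [Finset.sum_congr rfl fun i _ => by rw [h2 i]] at h
    rw [← h]
    exact Finset.sum_congr rfl fun i _ => by ring
  have hlam0 : ∀ i, lam i = 0 := by
    have h := linearIndependent_iff'.mp hu Finset.univ lam ?_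
    · intro i; exact h i (Finset.mem_univ i)
    · funext k
      simp only [Finset.sum_apply, Pi.smul_apply, smul_eq_mul, Pi.zero_apply]
      exact hcol k
  apply hf0
  apply LinearMap.ext
  intro w
  rw [hfw w]
  simp [hlam0]

lemma exists_common_nonzero {ι : Type*} [DecidableEq ι] (S : Finset ι)
    (φ : ι → EuclideanSpace ℝ (Fin d) →ₗ[ℝ] ℝ) (W : Set (EuclideanSpace ℝ (Fin d)))
    (hW0 : (0 : EuclideanSpace ℝ (Fin d)) ∈ W)
    (hWadd : ∀ v w, v ∈ W → w ∈ W → v + w ∈ W)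
    (hWsmul : ∀ (t : ℝ) v, v ∈ W → t • v ∈ W)
    (h : ∀ i ∈ S, ∃ w ∈ W, φ i w ≠ 0) :
    ∃ v ∈ W, ∀ i ∈ S, φ i v ≠ 0 := by
  classical
  induction S using Finset.induction_on with
  | empty => exact ⟨0, hW0, by simp⟩
  | @insert i S hiS ih =>
    obtain ⟨v, hvW, hv⟩ := ih (fun k hk => h k (Finset.mem_insert_of_mem hk))
    obtain ⟨u, huW, hu⟩ := h i (Finset.mem_insert_self i S)
    obtain ⟨t, ht⟩ := Infinite.exists_notMem_finset
      ((insert i S).image fun k => -(φ k v) / (φ k u))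
    refine ⟨v + t • u, hWadd _ _ hvW (hWsmul t u huW), ?_⟩
    intro k hk
    have hval : φ k (v + t • u) = φ k v + t * φ k u := by
      rw [map_add, LinearMap.map_smul, smul_eq_mul]
    by_cases hku : φ k u = 0
    · rw [hval, hku, mul_zero, add_zero]
      rcases Finset.mem_insert.mp hk with rfl | hkS
      · exact absurd hku hu
      · exact hv k hkS
    · intro h0
      apply ht
      refine Finset.mem_image.mpr ⟨k, hk, ?_⟩
      rw [hval] at h0
      rw [div_eq_iff hku]
      linarith

lemma exists_pos_avoid (ε : ℝ) (hε : 0 < ε) (bad : Finset ℝ) :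
    ∃ t : ℝ, 0 < t ∧ t < ε ∧ t ∉ bad := by
  obtain ⟨t, ht, htb⟩ := (Set.Ioo_infinite hε).exists_notMem_finset bad
  exact ⟨t, ht.1, ht.2, htb⟩

lemma exists_eps (D : Finset (Fin n)) (f σ : Fin n → ℝ) (hf : ∀ j ∈ D, 0 < f j) :
    ∃ ε : ℝ, 0 < ε ∧ ∀ j ∈ D, ∀ t : ℝ, |t| ≤ ε → |t * σ j| < f j := by
  classical
  set s : Finset ℝ := insert (1 : ℝ) (D.image fun j => f j / (1 + |σ j|)) with hsdef
  have hne : s.Nonempty := ⟨1, Finset.mem_insert_self _ _⟩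
  have hallpos : ∀ z ∈ s, 0 < z := by
    intro z hz
    rcases Finset.mem_insert.mp hz with rfl | hz
    · norm_num
    · obtain ⟨j, hj, rfl⟩ := Finset.mem_image.mp hz
      have := hf j hj
      positivity
  refine ⟨s.min' hne, hallpos _ (Finset.min'_mem s hne), ?_⟩
  intro j hj t hts
  have h1 : s.min' hne ≤ f j / (1 + |σ j|) :=
    Finset.min'_le s _ (Finset.mem_insert_of_mem (Finset.mem_image_of_mem _ hj))
  have h2 : 0 < 1 + |σ j| := by positivity
  have h3 : s.min' hne * (1 + |σ j|) ≤ f j := by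
    rw [← le_div_iff₀ h2]; exact h1
  have h4 : 0 < s.min' hne := hallpos _ (Finset.min'_mem s hne)
  rw [abs_mul]
  nlinarith [abs_nonneg (σ j), abs_nonneg t]

lemma sum_powerset_neg_one_real {α : Type*} [DecidableEq α] (Z : Finset α) :
    ∑ A ∈ Z.powerset, (-1 : ℝ) ^ A.card = if Z = ∅ then 1 else 0 := by
  by_cases hZ : Z = ∅
  · subst hZ; simp
  · rw [if_neg hZ]
    have := Finset.sum_powerset_neg_one_pow_card_of_nonempty
      (Finset.nonempty_iff_ne_empty.mpr hZ) (x := Z)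
    exact_mod_cast this

lemma powerset_union_sum {α : Type*} [DecidableEq α] (Z M : Finset α) (hd : Disjoint Z M)
    (f : Finset α → ℝ) :
    ∑ K ∈ (Z ∪ M).powerset, f K
      = ∑ A ∈ Z.powerset, ∑ B ∈ M.powerset, f (A ∪ B) := by
  rw [← Finset.sum_product']
  refine Finset.sum_nbij' (fun K => (K ∩ Z, K ∩ M)) (fun p => p.1 ∪ p.2) ?_ ?_ ?_ ?_ ?_
  · intro K hK
    rw [Finset.mem_powerset] at hK
    exact Finset.mem_product.mpr ⟨Finset.mem_powerset.mpr Finset.inter_subset_right,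
      Finset.mem_powerset.mpr Finset.inter_subset_right⟩
  · intro p hp
    rw [Finset.mem_product, Finset.mem_powerset, Finset.mem_powerset] at hp
    exact Finset.mem_powerset.mpr (Finset.union_subset_union hp.1 hp.2)
  · intro K hK
    rw [Finset.mem_powerset] at hK
    dsimp only
    rw [← Finset.inter_union_distrib_left, Finset.inter_eq_left.mpr hK]
  · intro p hp
    rw [Finset.mem_product, Finset.mem_powerset, Finset.mem_powerset] at hp
    have e2 : p.2 ∩ Z = ∅ := Finset.disjoint_iff_inter_eq_empty.mp
      (Finset.disjoint_of_subset_left hp.2 hd.symm)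
    have e1 : p.1 ∩ M = ∅ := Finset.disjoint_iff_inter_eq_empty.mp
      (Finset.disjoint_of_subset_left hp.1 hd)
    have h1 : (p.1 ∪ p.2) ∩ Z = p.1 := by
      rw [Finset.union_inter_distrib_right, Finset.inter_eq_left.mpr hp.1, e2,
        Finset.union_empty]
    have h2 : (p.1 ∪ p.2) ∩ M = p.2 := by
      rw [Finset.union_inter_distrib_right, Finset.inter_eq_left.mpr hp.2, e1,
        Finset.empty_union]
    exact Prod.ext h1 h2
  · intro K hK
    rw [Finset.mem_powerset] at hK
    dsimp only
    rw [← Finset.inter_union_distrib_left, Finset.inter_eq_left.mpr hK]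


variable {n : ℕ}

lemma comb (𝓕 : Finset (Finset (Fin n)))
    (hdc : ∀ F ∈ 𝓕, ∀ F' ⊆ F, F' ∈ 𝓕)
    (J Z M : Finset (Fin n)) (hZ : Z.Nonempty) (hZM : Disjoint Z M)
    (hP : ∀ K, K ⊆ Z ∪ M → (K ∩ Z).Nonempty → (J ∪ K ∈ 𝓕 ↔ (J ∪ Z) ∪ K ∈ 𝓕)) :
    (∑ K ∈ (Z ∪ M).powerset, if J ∪ K ∈ 𝓕 then (-1 : ℝ) ^ K.card else 0)
      = (∑ K ∈ M.powerset, if J ∪ K ∈ 𝓕 then (-1 : ℝ) ^ K.card else 0)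
        - ∑ K ∈ M.powerset, if (J ∪ Z) ∪ K ∈ 𝓕 then (-1 : ℝ) ^ K.card else 0 := by
  classical
  rw [powerset_union_sum Z M hZM]
  have hmem : (∅ : Finset (Fin n)) ∈ Z.powerset := Finset.mem_powerset.mpr (Finset.empty_subset Z)
  rw [← Finset.add_sum_erase _ _ hmem]
  have h0 : ∑ B ∈ M.powerset, (if J ∪ (∅ ∪ B) ∈ 𝓕 then (-1 : ℝ) ^ (∅ ∪ B).card else 0)
      = ∑ K ∈ M.powerset, if J ∪ K ∈ 𝓕 then (-1 : ℝ) ^ K.card else 0 := by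
    exact Finset.sum_congr rfl fun B _ => by rw [Finset.empty_union]
  rw [h0]
  have hstep : ∀ A ∈ Z.powerset.erase ∅,
      (∑ B ∈ M.powerset, if J ∪ (A ∪ B) ∈ 𝓕 then (-1 : ℝ) ^ (A ∪ B).card else 0)
        = (-1 : ℝ) ^ A.card *
            ∑ K ∈ M.powerset, if (J ∪ Z) ∪ K ∈ 𝓕 then (-1 : ℝ) ^ K.card else 0 := by
    intro A hA
    have hAne : A ≠ ∅ := (Finset.mem_erase.mp hA).1
    have hAZ : A ⊆ Z := Finset.mem_powerset.mp (Finset.mem_erase.mp hA).2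
    rw [Finset.mul_sum]
    refine Finset.sum_congr rfl fun B hB => ?_
    have hBM : B ⊆ M := Finset.mem_powerset.mp hB
    have hAB : Disjoint A B :=
      Finset.disjoint_of_subset_left hAZ (Finset.disjoint_of_subset_right hBM hZM)
    have hKZ : (A ∪ B) ∩ Z = A := by
      rw [Finset.union_inter_distrib_right, Finset.inter_eq_left.mpr hAZ,
        Finset.disjoint_iff_inter_eq_empty.mp
          (Finset.disjoint_of_subset_left hBM hZM.symm), Finset.union_empty]
    have hcond : (J ∪ (A ∪ B) ∈ 𝓕) ↔ ((J ∪ Z) ∪ B ∈ 𝓕) := by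
      have h1 := hP (A ∪ B) (Finset.union_subset_union hAZ hBM)
        (by rw [hKZ]; exact Finset.nonempty_iff_ne_empty.mpr hAne)
      have h2 : (J ∪ Z) ∪ (A ∪ B) = (J ∪ Z) ∪ B := by
        ext m
        simp only [Finset.mem_union]
        constructor
        · rintro (h | h | h)
          · exact Or.inl h
          · exact Or.inl (Or.inr (hAZ h))
          · exact Or.inr h
        · rintro (h | h)
          · exact Or.inl h
          · exact Or.inr (Or.inr h)
      rw [h1, h2]
    have hcard : (A ∪ B).card = A.card + B.card := Finset.card_union_of_disjoint hAB
    by_cases hF : (J ∪ Z) ∪ B ∈ 𝓕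
    · rw [if_pos (hcond.mpr hF), if_pos hF, hcard, pow_add]
    · rw [if_neg (fun hc => hF (hcond.mp hc)), if_neg hF, mul_zero]
  rw [Finset.sum_congr rfl hstep, ← Finset.sum_mul]
  have hsum : ∑ A ∈ Z.powerset.erase ∅, (-1 : ℝ) ^ A.card = -1 := by
    have h1 : ∑ A ∈ Z.powerset, (-1 : ℝ) ^ A.card = 0 := by
      rw [sum_powerset_neg_one_real]
      exact if_neg (Finset.nonempty_iff_ne_empty.mp hZ)
    have h2 := Finset.add_sum_erase _ (fun A : Finset (Fin n) => (-1 : ℝ) ^ A.card) hmem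
    rw [h1] at h2
    simp only [Finset.card_empty, pow_zero] at h2
    linarith
  rw [hsum]
  ring

lemma bridge (𝓕 : Finset (Finset (Fin n))) (J Neg : Finset (Fin n))
    (hJN : ∀ j ∈ J, j ∉ Neg) (g : Fin n → ℝ)
    (hNeg : ∀ j, j ∈ Neg ↔ g j < 0) :
    (∑ F ∈ 𝓕.filter (fun F => J ⊆ F), ∏ j ∈ F \ J, (Hv (g j) - 1))
      = ∑ K ∈ Neg.powerset, if J ∪ K ∈ 𝓕 then (-1 : ℝ) ^ K.card else 0 := by
  classical
  rw [Finset.sum_congr rfl (fun F _ => prod_hv_sub_one g (F \ J))]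
  have hcond : ∀ F : Finset (Fin n), (∀ j ∈ F \ J, g j < 0) ↔ F \ J ⊆ Neg := by
    intro F
    constructor
    · intro h j hj
      exact (hNeg j).mpr (h j hj)
    · intro h j hj
      exact (hNeg j).mp (h hj)
  rw [Finset.sum_congr rfl (fun F _ => if_congr (hcond F) rfl rfl)]
  rw [← Finset.sum_filter]
  rw [show (∑ K ∈ Neg.powerset, if J ∪ K ∈ 𝓕 then (-1 : ℝ) ^ K.card else 0)
      = ∑ K ∈ Neg.powerset.filter (fun K => J ∪ K ∈ 𝓕), (-1 : ℝ) ^ K.card from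
    (Finset.sum_filter _ _).symm]
  refine Finset.sum_nbij' (fun F => F \ J) (fun K => J ∪ K) ?_ ?_ ?_ ?_ ?_
  · intro F hF
    rw [Finset.mem_filter] at hF
    obtain ⟨hF1, hF2⟩ := hF
    rw [Finset.mem_filter] at hF1
    refine Finset.mem_filter.mpr ⟨Finset.mem_powerset.mpr hF2, ?_⟩
    rw [Finset.union_sdiff_of_subset hF1.2]
    exact hF1.1
  · intro K hK
    rw [Finset.mem_filter, Finset.mem_powerset] at hK
    refine Finset.mem_filter.mpr ⟨Finset.mem_filter.mpr ⟨hK.2, Finset.subset_union_left⟩, ?_⟩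
    rw [Finset.union_sdiff_cancel_left]
    · exact hK.1
    · exact Finset.disjoint_left.mpr fun j hjJ => fun hjK => hJN j hjJ (hK.1 hjK)
  · intro F hF
    rw [Finset.mem_filter, Finset.mem_filter] at hF
    exact Finset.union_sdiff_of_subset hF.1.2
  · intro K hK
    rw [Finset.mem_filter, Finset.mem_powerset] at hK
    apply Finset.union_sdiff_cancel_left
    exact Finset.disjoint_left.mpr fun j hjJ => fun hjK => hJN j hjJ (hK.1 hjK)
  · intro F _
    rfl


lemma exists_good_y (a : Matrix (Fin d) (Fin n) ℝ) (b : Fin n → ℝ)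
    (hgen : GeneralPosition a b) (hbound : ∀ j, IsBoundingFacet a b j)
    (J : Finset (Fin n)) (hJ : inComplex a b J) (x : EuclideanSpace ℝ (Fin d))
    (hn : 0 < n) :
    ∃ y : EuclideanSpace ℝ (Fin d),
      (∀ j ∈ J, lf a b j y = 0) ∧ (∀ j ∉ J, 0 < lf a b j y) ∧
      (∀ j k : Fin n, j ∉ J → k ∉ J → j ≠ k →
        lf a b j x * lf a b k y = lf a b k x * lf a b j y →
        ∀ w : EuclideanSpace ℝ (Fin d), (∀ m ∈ J, lf a b m w = 0) →
          lf a b j x * lf a b k w = lf a b k x * lf a b j w) := by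
  classical
  obtain ⟨w0, hw0p, hw0J⟩ : ∃ w, w ∈ poly a b ∧ ∀ j ∈ J, lf a b j w = 0 := by
    rcases J.eq_empty_or_nonempty with rfl | hne
    · obtain ⟨w, hw1, hw2⟩ := hbound ⟨0, hn⟩
      refine ⟨w, ?_, by simp⟩
      intro k
      rcases eq_or_ne k ⟨0, hn⟩ with rfl | hk
      · exact le_of_eq hw1.symm
      · exact le_of_lt (hw2 k hk)
    · exact witness_of_inComplex hne hJ
  set Z0 := Finset.univ.filter (fun j => j ∉ J ∧ lf a b j w0 = 0) with hZ0def
  set T := J ∪ Z0 with hTdef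
  have hTw : ∀ j ∈ T, lf a b j w0 = 0 := by
    intro j hj
    rcases Finset.mem_union.mp hj with h | h
    · exact hw0J j h
    · exact ((Finset.mem_filter.mp h).2).2
  have hTind := hgen T (mem_inComplex_witness w0 hw0p hTw)
  obtain ⟨v0, hv0⟩ := exists_dot_eq (fun j : T => fun i : Fin d => a i (j : Fin n)) hTind
    (fun j => if (j : Fin n) ∈ J then 0 else 1)
  set dv0 : Fin n → ℝ := fun j => ∑ i, a i j * v0 i with hdv0
  have hdv0J : ∀ j ∈ J, dv0 j = 0 := by
    intro j hj
    have := hv0 ⟨j, Finset.mem_union_left _ hj⟩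
    simpa [hj] using this
  have hdv0Z : ∀ j ∈ Z0, dv0 j = 1 := by
    intro j hj
    have hjJ : j ∉ J := (Finset.mem_filter.mp hj).2.1
    have := hv0 ⟨j, Finset.mem_union_right _ hj⟩
    simpa [hjJ] using this
  set D := Finset.univ.filter (fun j => j ∉ J ∧ j ∉ Z0) with hDdef
  have hDpos : ∀ j ∈ D, 0 < lf a b j w0 := by
    intro j hj
    obtain ⟨-, hjJ, hjZ⟩ := Finset.mem_filter.mp hj
    rcases lt_or_eq_of_le (hw0p j) with h | h
    · exact h
    · exact absurd (Finset.mem_filter.mpr ⟨Finset.mem_univ j, hjJ, h.symm⟩) hjZ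
  obtain ⟨ε0, hε0, hε0b⟩ := exists_eps D (fun j => lf a b j w0) dv0 hDpos
  set y0 : EuclideanSpace ℝ (Fin d) := w0 + ε0 • v0 with hy0def
  have hy0 : ∀ j, lf a b j y0 = lf a b j w0 + ε0 * dv0 j := fun j => lf_add_smul a b j w0 v0 ε0
  have hy0J : ∀ j ∈ J, lf a b j y0 = 0 := by
    intro j hj
    rw [hy0 j, hw0J j hj, hdv0J j hj]
    ring
  have hy0pos : ∀ j, j ∉ J → 0 < lf a b j y0 := by
    intro j hjJ
    by_cases hjZ : j ∈ Z0
    · rw [hy0 j, hTw j (Finset.mem_union_right _ hjZ), hdv0Z j hjZ]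
      simpa using hε0
    · have hjD : j ∈ D := Finset.mem_filter.mpr ⟨Finset.mem_univ j, hjJ, hjZ⟩
      have h1 := hε0b j hjD ε0 (le_of_eq (abs_of_pos hε0))
      have h2 := neg_abs_le (ε0 * dv0 j)
      have h3 := hDpos j hjD
      rw [hy0 j]
      linarith
  -- genericity direction
  set dotl : Fin n → EuclideanSpace ℝ (Fin d) →ₗ[ℝ] ℝ := fun j =>
    { toFun := fun v => ∑ i, a i j * v i
      map_add' := by
        intro v w
        simp only [PiLp.add_apply, mul_add]
        rw [Finset.sum_add_distrib]
      map_smul' := by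
        intro r v
        simp only [PiLp.smul_apply, smul_eq_mul, RingHom.id_apply, Finset.mul_sum]
        exact Finset.sum_congr rfl fun k _ => by ring } with hdotl
  have hdotlapp : ∀ j v, dotl j v = ∑ i, a i j * v i := fun j v => rfl
  set W : Set (EuclideanSpace ℝ (Fin d)) := {v | ∀ m ∈ J, dotl m v = 0} with hWdef
  set α : Fin n × Fin n → EuclideanSpace ℝ (Fin d) →ₗ[ℝ] ℝ := fun p =>
    lf a b p.1 x • dotl p.2 - lf a b p.2 x • dotl p.1 with hα
  set S := (Finset.univ ×ˢ Finset.univ : Finset (Fin n × Fin n)).filter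
    (fun p => ∃ w ∈ W, α p w ≠ 0) with hS
  obtain ⟨v1, hv1W, hv1S⟩ := exists_common_nonzero S α W
    (by intro m _; simp) 
    (by intro v w hv hw m hm; rw [map_add, hv m hm, hw m hm]; ring)
    (by intro t v hv m hm; rw [LinearMap.map_smul, hv m hm]; simp)
    (fun p hp => (Finset.mem_filter.mp hp).2)
  set dv1 : Fin n → ℝ := fun j => dotl j v1 with hdv1
  obtain ⟨ε1, hε1, hε1b⟩ := exists_eps (Finset.univ.filter (fun j => j ∉ J))
    (fun j => lf a b j y0) dv1 (fun j hj => hy0pos j (Finset.mem_filter.mp hj).2)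
  set bad : Finset ℝ := S.image (fun p =>
    -(lf a b p.1 x * lf a b p.2 y0 - lf a b p.2 x * lf a b p.1 y0) / (α p v1)) with hbad
  obtain ⟨t, ht0, htε, htbad⟩ := exists_pos_avoid ε1 hε1 bad
  set y : EuclideanSpace ℝ (Fin d) := y0 + t • v1 with hydef
  have hlfy : ∀ j, lf a b j y = lf a b j y0 + t * dv1 j := by
    intro j
    rw [hydef, lf_add_smul a b j y0 v1 t]
    rfl
  have hyJ : ∀ j ∈ J, lf a b j y = 0 := by
    intro j hj
    rw [hlfy j, hy0J j hj]
    have : dv1 j = 0 := hv1W j hj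
    rw [this]
    ring
  have hypos : ∀ j, j ∉ J → 0 < lf a b j y := by
    intro j hjJ
    have h1 := hε1b j (Finset.mem_filter.mpr ⟨Finset.mem_univ j, hjJ⟩) t
      (by rw [abs_of_pos ht0]; exact le_of_lt htε)
    have h2 := neg_abs_le (t * dv1 j)
    have h3 := hy0pos j hjJ
    rw [hlfy j]
    linarith
  refine ⟨y, hyJ, hypos, ?_⟩
  intro j k hjJ hkJ hjk hg w hwJ
  have hαapp : ∀ (p : Fin n × Fin n) (v : EuclideanSpace ℝ (Fin d)),
      α p v = lf a b p.1 x * dotl p.2 v - lf a b p.2 x * dotl p.1 v := by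
    intro p v
    rw [hα]
    simp
  by_cases hpS : (j, k) ∈ S
  · exfalso
    have hαv1 : α (j, k) v1 ≠ 0 := hv1S (j, k) hpS
    have hgy : lf a b j x * lf a b k y - lf a b k x * lf a b j y
        = (lf a b j x * lf a b k y0 - lf a b k x * lf a b j y0) + t * α (j, k) v1 := by
      rw [hlfy j, hlfy k, hαapp]
      simp only [hdv1]
      ring
    have h0 : lf a b j x * lf a b k y - lf a b k x * lf a b j y = 0 := by rw [hg]; ring
    apply htbad
    refine Finset.mem_image.mpr ⟨(j, k), hpS, ?_⟩
    rw [div_eq_iff hαv1]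
    simp only
    nlinarith [hgy, h0]
  · have hall : ∀ w' ∈ W, α (j, k) w' = 0 := by
      intro w' hw'
      by_contra hne
      exact hpS (Finset.mem_filter.mpr
        ⟨Finset.mem_product.mpr ⟨Finset.mem_univ j, Finset.mem_univ k⟩, ⟨w', hw', hne⟩⟩)
    have hdotlf : ∀ m (z : EuclideanSpace ℝ (Fin d)), dotl m z = lf a b m z - b m := by
      intro m z
      rw [hdotlapp]
      unfold lf
      ring
    have hwy : w - y ∈ W := by
      intro m hm
      show dotl m (w - y) = 0
      rw [map_sub, hdotlf, hdotlf, hwJ m hm, hyJ m hm]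
      ring
    have h0 := hall _ hwy
    have hexp : lf a b j x * lf a b k w - lf a b k x * lf a b j w
        = α (j, k) (w - y) + (lf a b j x * lf a b k y - lf a b k x * lf a b j y) := by
      rw [hαapp, map_sub, map_sub, hdotlf k w, hdotlf k y, hdotlf j w, hdotlf j y]
      ring
    have hgy0 : lf a b j x * lf a b k y - lf a b k x * lf a b j y = 0 := by rw [hg]; ring
    rw [h0, hgy0] at hexp
    linarith

lemma base (a : Matrix (Fin d) (Fin n) ℝ) (b : Fin n → ℝ) (𝓕 : Finset (Finset (Fin n)))
    (J : Finset (Fin n)) (hJ : J ∈ 𝓕) (x : EuclideanSpace ℝ (Fin d))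
    (hpos : ∀ j, ¬ lf a b j x < 0) :
    ∏ j ∈ Finset.univ \ J, Hv (lf a b j x)
      = ∑ F ∈ 𝓕.filter (fun F => J ⊆ F), ∏ j ∈ F \ J, (Hv (lf a b j x) - 1) := by
  classical
  rw [prod_hv (fun j => lf a b j x) (Finset.univ \ J), if_pos (fun j _ => not_lt.mp (hpos j))]
  rw [Finset.sum_congr rfl (fun F _ => prod_hv_sub_one (fun j => lf a b j x) (F \ J))]
  rw [Finset.sum_eq_single J]
  · rw [Finset.sdiff_self, if_pos (by simp), Finset.card_empty, pow_zero]
  · intro F hF hFne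
    obtain ⟨hFc, hJF⟩ := Finset.mem_filter.mp hF
    have hex : ∃ j, j ∈ F \ J := by
      by_contra hc
      push_neg at hc
      apply hFne
      refine Finset.Subset.antisymm ?_ hJF
      intro m hm
      by_contra hmJ
      exact hc m (Finset.mem_sdiff.mpr ⟨hm, hmJ⟩)
    obtain ⟨j, hj⟩ := hex
    rw [if_neg]
    intro hcond
    exact hpos j (hcond j hj)
  · intro hJmem
    exact absurd (Finset.mem_filter.mpr ⟨hJ, Finset.Subset.refl J⟩) hJmem

lemma key (a : Matrix (Fin d) (Fin n) ℝ) (b : Fin n → ℝ)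
    (hgen : GeneralPosition a b) (hbound : ∀ j, IsBoundingFacet a b j)
    (𝓕 : Finset (Finset (Fin n))) (h𝓕 : ∀ F, F ∈ 𝓕 ↔ inComplex a b F) :
    ∀ (μ : ℕ) (J : Finset (Fin n)), J ∈ 𝓕 → ∀ x, x ∈ VJ J a b →
      (n - J.card) + (Finset.univ.filter (fun j => lf a b j x < 0)).card ≤ μ →
      ∏ j ∈ Finset.univ \ J, Hv (lf a b j x)
        = ∑ F ∈ 𝓕.filter (fun F => J ⊆ F), ∏ j ∈ F \ J, (Hv (lf a b j x) - 1) := by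
  classical
  intro μ
  induction μ with
  | zero =>
    intro J hJ x hx hμ
    apply base a b 𝓕 J hJ x
    intro j hlt
    have h0 : (Finset.univ.filter (fun j => lf a b j x < 0)).card = 0 := by omega
    rw [Finset.card_eq_zero] at h0
    have hmem : j ∈ Finset.univ.filter (fun j => lf a b j x < 0) :=
      Finset.mem_filter.mpr ⟨Finset.mem_univ j, hlt⟩
    rw [h0] at hmem
    exact Finset.notMem_empty j hmem
  | succ μ ih =>
    intro J hJ x hx hμ
    set Neg := Finset.univ.filter (fun j => lf a b j x < 0) with hNegdef
    rcases Finset.eq_empty_or_nonempty Neg with hNe | hNne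
    · apply base a b 𝓕 J hJ x
      intro j hlt
      have hmem : j ∈ Neg := Finset.mem_filter.mpr ⟨Finset.mem_univ j, hlt⟩
      rw [hNe] at hmem
      exact Finset.notMem_empty j hmem
    · have hNmem : ∀ j, j ∈ Neg ↔ lf a b j x < 0 := by
        intro j
        simp [hNegdef]
      have hNJ : ∀ j ∈ Neg, j ∉ J := by
        intro j hj hjJ
        have h1 := hx j hjJ
        have h2 := (hNmem j).mp hj
        rw [h1] at h2
        exact lt_irrefl 0 h2
      have hn : 0 < n := hNne.choose.pos
      obtain ⟨y, hyJ, hypos, hygen⟩ := exists_good_y a b hgen hbound J ((h𝓕 J).mp hJ) x hn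
      set p : Fin n → ℝ := fun j => lf a b j x with hp
      set q : Fin n → ℝ := fun j => lf a b j y with hq
      set s : Fin n → ℝ := fun j => p j / (p j - q j) with hs
      have hkey : ∀ j ∈ Neg, p j < 0 ∧ 0 < q j ∧ p j - q j < 0 ∧ 0 < s j ∧ s j < 1 ∧
          (1 - s j) * p j + s j * q j = 0 := by
        intro j hj
        have h1 : p j < 0 := (hNmem j).mp hj
        have h2 : 0 < q j := hypos j (hNJ j hj)
        have h3 : p j - q j < 0 := by linarith
        have h3' : p j - q j ≠ 0 := ne_of_lt h3
        have hsval : s j = p j / (p j - q j) := rfl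
        have h4 : 0 < s j := by
          rw [hsval]
          exact div_pos_of_neg_of_neg h1 h3
        have h6 : (1 - s j) * p j + s j * q j = 0 := by
          rw [hsval]
          field_simp
          ring
        have h5 : s j < 1 := by
          have h7 : s j = 1 + q j / (p j - q j) := by
            rw [hsval]
            field_simp
            ring
          have h8 : q j / (p j - q j) < 0 := div_neg_of_pos_of_neg h2 h3
          linarith
        exact ⟨h1, h2, h3, h4, h5, h6⟩
      obtain ⟨j0, hj0N, hj0u⟩ := Finset.mem_image.mp
        (Finset.min'_mem (Neg.image s) (hNne.image s))
      set u : ℝ := (Neg.image s).min' (hNne.image s) with hudef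
      have humin : ∀ j ∈ Neg, u ≤ s j := by
        intro j hj
        rw [hudef]
        exact Finset.min'_le _ _ (Finset.mem_image_of_mem s hj)
      have hu0 : 0 < u := by
        rw [← hj0u]
        exact (hkey j0 hj0N).2.2.2.1
      have hu1 : u < 1 := by
        rw [← hj0u]
        exact (hkey j0 hj0N).2.2.2.2.1
      set Z := Neg.filter (fun j => s j = u) with hZ
      set M := Neg.filter (fun j => u < s j) with hM
      have hZne : Z.Nonempty := ⟨j0, Finset.mem_filter.mpr ⟨hj0N, hj0u⟩⟩
      have hZM : Disjoint Z M := by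
        rw [Finset.disjoint_left]
        intro j hjZ hjM
        have h1 := (Finset.mem_filter.mp hjZ).2
        have h2 := (Finset.mem_filter.mp hjM).2
        rw [h1] at h2
        exact lt_irrefl u h2
      have hZMu : Z ∪ M = Neg := by
        apply Finset.Subset.antisymm
        · exact Finset.union_subset (Finset.filter_subset _ _) (Finset.filter_subset _ _)
        · intro j hj
          rcases eq_or_lt_of_le (humin j hj) with h | h
          · exact Finset.mem_union_left _ (Finset.mem_filter.mpr ⟨hj, h.symm⟩)
          · exact Finset.mem_union_right _ (Finset.mem_filter.mpr ⟨hj, h⟩)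
      set z : EuclideanSpace ℝ (Fin d) := (1 - u) • x + u • y with hz
      have hlfz : ∀ j, lf a b j z = (1 - u) * p j + u * q j := by
        intro j
        rw [hz]
        exact lf_comb a b j x y (1 - u) u (by ring)
      have hzJ : ∀ m ∈ J, lf a b m z = 0 := by
        intro m hm
        rw [hlfz m]
        have h1 : p m = 0 := hx m hm
        have h2 : q m = 0 := hyJ m hm
        rw [h1, h2]
        ring
      have hzZ : ∀ j ∈ Z, lf a b j z = 0 := by
        intro j hjZ
        obtain ⟨hjN, hsj⟩ := Finset.mem_filter.mp hjZ
        obtain ⟨-, -, -, -, -, h6⟩ := hkey j hjN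
        rw [hlfz j, ← hsj]
        exact h6
      have hzM : ∀ j ∈ M, lf a b j z < 0 := by
        intro j hjM
        obtain ⟨hjN, hsj⟩ := Finset.mem_filter.mp hjM
        obtain ⟨h1, h2, h3, -, -, h6⟩ := hkey j hjN
        have h7 : 0 < (s j - u) * (q j - p j) :=
          mul_pos (by linarith) (by linarith)
        rw [hlfz j]
        nlinarith [h6, h7]
      have hzother : ∀ j, j ∉ J → j ∉ Neg → 0 < lf a b j z := by
        intro j hjJ hjN
        have h1 : 0 ≤ p j := not_lt.mp (fun h => hjN ((hNmem j).mpr h))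
        have h2 : 0 < q j := hypos j hjJ
        rw [hlfz j]
        nlinarith [hu0, hu1]
      have hzNeg : ∀ j, lf a b j z < 0 ↔ j ∈ M := by
        intro j
        constructor
        · intro hlt
          by_cases hjJ : j ∈ J
          · rw [hzJ j hjJ] at hlt
            exact absurd hlt (lt_irrefl 0)
          by_cases hjN : j ∈ Neg
          · rcases Finset.mem_union.mp (by rw [hZMu]; exact hjN) with hZj | hMj
            · rw [hzZ j hZj] at hlt
              exact absurd hlt (lt_irrefl 0)
            · exact hMj
          · have := hzother j hjJ hjN
            linarith
        · exact hzM j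
      have hzVJ : z ∈ VJ J a b := hzJ
      have hNegz : Finset.univ.filter (fun j => lf a b j z < 0) = M := by
        ext j
        simp only [Finset.mem_filter, Finset.mem_univ, true_and]
        exact hzNeg j
      have hNc : Neg.card = Z.card + M.card := by
        rw [← hZMu, Finset.card_union_of_disjoint hZM]
      have hZc1 : 1 ≤ Z.card := Finset.card_pos.mpr hZne
      have hmeas1 : (n - J.card) + M.card ≤ μ := by omega
      have hIH1 := ih J hJ z hzVJ (by rw [hNegz]; exact hmeas1)
      have hJM : ∀ m ∈ J, m ∉ M := fun m hm hmM =>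
        hNJ m ((Finset.filter_subset _ _) hmM) hm
      have hbr1 := bridge 𝓕 J M hJM (fun j => lf a b j z) (fun j => (hzNeg j).symm)
      have hL1 : (∏ j ∈ Finset.univ \ J, Hv (lf a b j z)) = if M = ∅ then 1 else 0 := by
        rw [prod_hv (fun j => lf a b j z) (Finset.univ \ J)]
        by_cases hMe : M = ∅
        · rw [if_pos hMe, if_pos]
          intro j _
          by_contra hlt
          have hmem := (hzNeg j).mp (not_le.mp hlt)
          rw [hMe] at hmem
          exact Finset.notMem_empty j hmem
        · rw [if_neg hMe, if_neg]
          intro hall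
          obtain ⟨j, hjM⟩ := Finset.nonempty_iff_ne_empty.mpr hMe
          have hjJ : j ∉ J := fun h => hJM j h hjM
          have h1 := hall j (Finset.mem_sdiff.mpr ⟨Finset.mem_univ j, hjJ⟩)
          have h2 := (hzNeg j).mpr hjM
          linarith
      have hS1 : (∑ K ∈ M.powerset, if J ∪ K ∈ 𝓕 then (-1 : ℝ) ^ K.card else 0)
          = if M = ∅ then 1 else 0 := by
        rw [← hbr1, ← hIH1, hL1]
      have hdc : ∀ F ∈ 𝓕, ∀ F' ⊆ F, F' ∈ 𝓕 := fun F hF F' h =>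
        (h𝓕 F').mpr (inComplex_mono h ((h𝓕 F).mp hF))
      have hzZ0 : ∀ m ∈ J ∪ Z, lf a b m z = 0 := by
        intro m hm
        rcases Finset.mem_union.mp hm with h | h
        · exact hzJ m h
        · exact hzZ m h
      have hS2 : (∑ K ∈ M.powerset, if (J ∪ Z) ∪ K ∈ 𝓕 then (-1 : ℝ) ^ K.card else 0)
          = if M = ∅ then 1 else 0 := by
        by_cases hJZ : J ∪ Z ∈ 𝓕
        · have hJZM : ∀ m ∈ J ∪ Z, m ∉ M := by
            intro m hm
            rcases Finset.mem_union.mp hm with h | h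
            · exact hJM m h
            · exact fun hmM => (Finset.disjoint_left.mp hZM) h hmM
          have hzVJ2 : z ∈ VJ (J ∪ Z) a b := hzZ0
          have hJdisj : Disjoint J Z := by
            rw [Finset.disjoint_left]
            intro m hmJ hmZ
            exact hNJ m ((Finset.filter_subset _ _) hmZ) hmJ
          have hJZc : (J ∪ Z).card = J.card + Z.card := Finset.card_union_of_disjoint hJdisj
          have hmeas2 : (n - (J ∪ Z).card) + M.card ≤ μ := by omega
          have hIH2 := ih (J ∪ Z) hJZ z hzVJ2 (by rw [hNegz]; exact hmeas2)
          have hbr2 := bridge 𝓕 (J ∪ Z) M hJZM (fun j => lf a b j z) (fun j => (hzNeg j).symm)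
          have hL2 : (∏ j ∈ Finset.univ \ (J ∪ Z), Hv (lf a b j z)) = if M = ∅ then 1 else 0 := by
            rw [prod_hv (fun j => lf a b j z) (Finset.univ \ (J ∪ Z))]
            by_cases hMe : M = ∅
            · rw [if_pos hMe, if_pos]
              intro j _
              by_contra hlt
              have hmem := (hzNeg j).mp (not_le.mp hlt)
              rw [hMe] at hmem
              exact Finset.notMem_empty j hmem
            · rw [if_neg hMe, if_neg]
              intro hall
              obtain ⟨j, hjM⟩ := Finset.nonempty_iff_ne_empty.mpr hMe
              have hjJZ : j ∉ J ∪ Z := fun h => hJZM j h hjM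
              have h1 := hall j (Finset.mem_sdiff.mpr ⟨Finset.mem_univ j, hjJZ⟩)
              have h2 := (hzNeg j).mpr hjM
              linarith
          rw [← hbr2, ← hIH2, hL2]
        · have hMne : M ≠ ∅ := by
            intro hMe
            apply hJZ
            apply (h𝓕 _).mpr
            apply mem_inComplex_witness z _ hzZ0
            intro j
            by_contra hlt
            have hmem := (hzNeg j).mp (not_le.mp hlt)
            rw [hMe] at hmem
            exact Finset.notMem_empty j hmem
          rw [if_neg hMne]
          apply Finset.sum_eq_zero
          intro K _
          rw [if_neg]
          intro hmem
          exact hJZ (hdc _ hmem _ Finset.subset_union_left)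
      have hP : ∀ K, K ⊆ Z ∪ M → (K ∩ Z).Nonempty → (J ∪ K ∈ 𝓕 ↔ (J ∪ Z) ∪ K ∈ 𝓕) := by
        rintro K hKsub ⟨j, hjKZ⟩
        have hjK : j ∈ K := (Finset.mem_inter.mp hjKZ).1
        have hjZ : j ∈ Z := (Finset.mem_inter.mp hjKZ).2
        constructor
        · intro hJK
          obtain ⟨w, hwp, hw0⟩ := witness_of_inComplex ⟨j, Finset.mem_union_right _ hjK⟩
            ((h𝓕 _).mp hJK)
          apply (h𝓕 _).mpr
          apply mem_inComplex_witness w hwp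
          intro m hm
          rcases Finset.mem_union.mp hm with hm' | hmK
          · rcases Finset.mem_union.mp hm' with hmJ | hmZ
            · exact hw0 m (Finset.mem_union_left _ hmJ)
            · by_cases hmK2 : m ∈ K
              · exact hw0 m (Finset.mem_union_right _ hmK2)
              rcases eq_or_ne m j with rfl | hmj
              · exact hw0 m (Finset.mem_union_right _ hjK)
              obtain ⟨hjN, hsj⟩ := Finset.mem_filter.mp hjZ
              obtain ⟨hmN, hsm⟩ := Finset.mem_filter.mp hmZ
              obtain ⟨hj1, hj2, hj3, -, -, -⟩ := hkey j hjN
              obtain ⟨hm1, hm2, hm3, -, -, -⟩ := hkey m hmN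
              have hcross : p j * (p m - q m) = p m * (p j - q j) := by
                have hdd0 : s j = s m := by rw [hsj, hsm]
                have hdd : p j / (p j - q j) = p m / (p m - q m) := hdd0
                rw [div_eq_div_iff (ne_of_lt hj3) (ne_of_lt hm3)] at hdd
                linarith [hdd]
              have hprop : p j * q m = p m * q j := by linear_combination -hcross
              have hwVJ : ∀ m' ∈ J, lf a b m' w = 0 := fun m' hm' =>
                hw0 m' (Finset.mem_union_left _ hm')
              have hres := hygen j m (hNJ j hjN) (hNJ m hmN) (Ne.symm hmj) hprop w hwVJ
              have hjw : lf a b j w = 0 := hw0 j (Finset.mem_union_right _ hjK)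
              rw [hjw, mul_zero] at hres
              rcases mul_eq_zero.mp hres with h | h
              · exact absurd h (ne_of_lt hj1)
              · exact h
          · exact hw0 m (Finset.mem_union_right _ hmK)
        · intro h
          apply hdc _ h
          intro m hm
          rcases Finset.mem_union.mp hm with h' | h'
          · exact Finset.mem_union_left _ (Finset.mem_union_left _ h')
          · exact Finset.mem_union_right _ h'
      have hcomb := comb 𝓕 hdc J Z M hZne hZM hP
      have hLx : (∏ j ∈ Finset.univ \ J, Hv (lf a b j x)) = 0 := by
        rw [prod_hv (fun j => lf a b j x) (Finset.univ \ J), if_neg]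
        intro hall
        obtain ⟨j, hjN⟩ := hNne
        have h1 := hall j (Finset.mem_sdiff.mpr ⟨Finset.mem_univ j, hNJ j hjN⟩)
        have h2 := (hNmem j).mp hjN
        linarith
      have hNJ' : ∀ j ∈ J, j ∉ Neg := fun j hjJ hjN => hNJ j hjN hjJ
      have hbrx := bridge 𝓕 J Neg hNJ' (fun j => lf a b j x) hNmem
      rw [hLx, hbrx, ← hZMu, hcomb, hS1, hS2, sub_self]

end Stmt0Aux

/-- Proposition 11: inclusion–exclusion identity on a face.
If `P` is in general position with bounding half-spaces `H_1,…,H_n` and `J ∈ 𝓕`, then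
for every `x ∈ V(J,ã,b̃)`,
`∏_{j ∈ [n]\J} H(f_j(ã,b̃,x)) = ∑_{F ∈ 𝓕_J} ∏_{j ∈ F\J} (H(f_j(ã,b̃,x)) − 1)`. -/
theorem stmt0 {d n : ℕ} (ta : Matrix (Fin d) (Fin n) ℝ) (tb : Fin n → ℝ)
    (hgen : GeneralPosition ta tb)
    (hbound : ∀ j, IsBoundingFacet ta tb j)
    (𝓕 : Finset (Finset (Fin n))) (h𝓕 : ∀ F, F ∈ 𝓕 ↔ inComplex ta tb F)
    (J : Finset (Fin n)) (hJ : J ∈ 𝓕)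
    (x : EuclideanSpace ℝ (Fin d)) (hx : x ∈ VJ J ta tb) :
    ∏ j ∈ Finset.univ \ J, Hv (lf ta tb j x)
      = ∑ F ∈ 𝓕.filter (fun F => J ⊆ F), ∏ j ∈ F \ J, (Hv (lf ta tb j x) - 1) := by
  classical
  exact Stmt0Aux.key ta tb hgen hbound 𝓕 h𝓕
    ((n - J.card) + (Finset.univ.filter (fun j => lf ta tb j x < 0)).card) J hJ x hx le_rfl

end
end

section
/- Let n = d and let ã ∈ ℝ^{d×d} be an upper triangular matrix with nonzero diagonal entries ã_{11},...,ã_{dd} (so the columns of ã are linearly independent and the polyhedron P = {x : f_j(ã,b̃,x) ≥ 0, 1 ≤ j ≤ d} is a simplicial cone, whose abstract simplicial complex 𝓕 is the full power set of {1,...,d}). Let D = diag(ã_{11},...,ã_{dd}). Then for every J ⊆ {1,...,d}, the derivative g^J(a,b) = (∏_{j∈J} ∂/∂b_j) φ(a,b) evaluated at (D, 0) satisfies g^J(D, 0) = (2π)^{−d/2} · (∏_{j∈J} |ã_{jj}|)^{−1} · (π/2)^{(d−|J|)/2}. -/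
open MeasureTheory Real

noncomputable section

/-- `φ(a,b)` for a simplicial cone (`n = d`), whose abstract simplicial complex is the
full power set of `{1,…,d}`. -/
def phiAll {d : ℕ} (a : Matrix (Fin d) (Fin d) ℝ) (b : Fin d → ℝ) : ℝ :=
  (2 * π) ^ (-(d : ℝ) / 2) *
    ∫ x : EuclideanSpace ℝ (Fin d),
      Real.exp (-(1 / 2) * ∑ i, x i ^ 2) *
        ∑ F : Finset (Fin d), ∏ j ∈ F, (Hv (lf a b j x) - 1)

/- ### Auxiliary lemmas for `stmt9` -/

def gauss (x : ℝ) : ℝ := Real.exp (-(1/2) * x ^ 2)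

lemma gauss_cont : Continuous gauss := by
  unfold gauss; fun_prop

lemma gauss_integrable : Integrable gauss := by
  have h := integrable_exp_neg_mul_sq (by norm_num : (0:ℝ) < 1/2)
  convert h using 2 with x
  rfl

lemma gauss_total : ∫ x, gauss x = Real.sqrt (2*π) := by
  have h := integral_gaussian (1/2)
  simp only [neg_mul] at h
  rw [show (∫ x, gauss x) = ∫ x : ℝ, Real.exp (-((1/2) * x ^ 2)) by simp [gauss]]
  rw [h]; congr 1; ring

def Ncdf (t : ℝ) : ℝ := ∫ x in Set.Ioi t, gauss x

lemma Ncdf_zero : Ncdf 0 = Real.sqrt (2*π) / 2 := by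
  have hsym : ∫ x in Set.Iic (0:ℝ), gauss x = ∫ x in Set.Ioi (0:ℝ), gauss x := by
    have h := integral_comp_neg_Ioi (c := (0:ℝ)) (f := gauss)
    rw [neg_zero] at h
    rw [← h]
    congr 1; funext x; simp [gauss]
  have htot := intervalIntegral.integral_Iic_add_Ioi (b := (0:ℝ))
    gauss_integrable.integrableOn gauss_integrable.integrableOn
  rw [gauss_total, hsym] at htot
  unfold Ncdf; linarith

lemma Ncdf_hasDerivAt (t : ℝ) : HasDerivAt Ncdf (-(gauss t)) t := by
  have hrepr : Ncdf = fun s => (Real.sqrt (2*π) - (∫ x in Set.Iic (0:ℝ), gauss x))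
      - ∫ x in (0:ℝ)..s, gauss x := by
    funext s
    have h1 := intervalIntegral.integral_Iic_add_Ioi (b := s)
      gauss_integrable.integrableOn gauss_integrable.integrableOn
    rw [gauss_total] at h1
    have h2 := intervalIntegral.integral_Iic_sub_Iic (a := (0:ℝ)) (b := s) (μ := volume)
      gauss_integrable.integrableOn gauss_integrable.integrableOn
    unfold Ncdf; linarith
  have hD : HasDerivAt (fun u => ∫ x in (0:ℝ)..u, gauss x) (gauss t) t :=
    intervalIntegral.integral_hasDerivAt_right gauss_integrable.intervalIntegrable
      gauss_cont.aestronglyMeasurable.stronglyMeasurableAtFilter gauss_cont.continuousAt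
  rw [hrepr]
  exact hD.const_sub _

lemma gauss_neg (x : ℝ) : gauss (-x) = gauss x := by simp [gauss]

def G (c t : ℝ) : ℝ := if 0 < c then Ncdf (-(t/c)) else Real.sqrt (2*π) - Ncdf (-(t/c))

lemma G_zero (c : ℝ) : G c 0 = Real.sqrt (2*π) / 2 := by
  unfold G
  rw [zero_div, neg_zero, Ncdf_zero]
  split_ifs <;> ring

lemma G_hasDerivAt (c : ℝ) (hc : c ≠ 0) (t : ℝ) :
    HasDerivAt (G c) (gauss (t/c) / |c|) t := by
  have ht : HasDerivAt (fun t : ℝ => -(t/c)) (-(1/c)) t := by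
    simpa using ((hasDerivAt_id t).div_const c).fun_neg
  have hN : HasDerivAt (fun t : ℝ => Ncdf (-(t/c)))
      (-(gauss (-(t/c))) * (-(1/c))) t := by
      have := (Ncdf_hasDerivAt (-(t/c))).comp t ht; exact this
  rw [gauss_neg] at hN
  by_cases h : 0 < c
  · have hG : G c = fun t => Ncdf (-(t/c)) := by funext s; simp [G, h]
    rw [hG]
    convert hN using 1
    rw [abs_of_pos h]; ring
  · have hG : G c = fun t => Real.sqrt (2*π) - Ncdf (-(t/c)) := by
      funext s; simp [G, h]
    rw [hG]
    have := hN.const_sub (Real.sqrt (2*π))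
    refine this.congr_deriv ?_
    rw [abs_of_neg (lt_of_le_of_ne (not_lt.mp h) hc)]; ring

lemma integral_gauss_Hv (c b : ℝ) (hc : c ≠ 0) :
    ∫ x, gauss x * Hv (c * x + b) = G c b := by
  have hind : (fun x => gauss x * Hv (c * x + b))
      = Set.indicator {x : ℝ | 0 ≤ c * x + b} gauss := by
    funext x
    by_cases h : 0 ≤ c * x + b <;>
      simp [Hv, Set.indicator, h]
  rw [hind, integral_indicator]
  swap
  · exact measurableSet_le measurable_const (by fun_prop)
  by_cases h : 0 < c
  · have hset : {x : ℝ | 0 ≤ c * x + b} = Set.Ici (-(b/c)) := by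
      ext x
      rw [Set.mem_setOf_eq, Set.mem_Ici, neg_div', div_le_iff₀ h]
      constructor <;> intro <;> nlinarith
    rw [hset, MeasureTheory.integral_Ici_eq_integral_Ioi, G, if_pos h]
    rfl
  · have hc' : c < 0 := lt_of_le_of_ne (not_lt.mp h) hc
    have hset : {x : ℝ | 0 ≤ c * x + b} = Set.Iic (-(b/c)) := by
      ext x
      rw [Set.mem_setOf_eq, Set.mem_Iic, neg_div', le_div_iff_of_neg hc']
      constructor <;> intro <;> nlinarith
    have htot := intervalIntegral.integral_Iic_add_Ioi (b := -(b/c))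
      gauss_integrable.integrableOn gauss_integrable.integrableOn
    rw [gauss_total] at htot
    rw [hset, G, if_neg h]
    unfold Ncdf
    linarith

lemma phi_factor {d : ℕ} (D : Fin d → ℝ) (b : Fin d → ℝ) :
    ∫ x : EuclideanSpace ℝ (Fin d),
      Real.exp (-(1/2 : ℝ) * ∑ i, x i ^ 2) * ∏ j, Hv (D j * x j + b j)
    = ∏ j, ∫ t : ℝ, gauss t * Hv (D j * t + b j) := by
  have h0 : ∀ x : EuclideanSpace ℝ (Fin d),
      Real.exp (-(1/2 : ℝ) * ∑ i, x i ^ 2) * ∏ j, Hv (D j * x j + b j)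
      = ∏ j, (gauss (x j) * Hv (D j * x j + b j)) := by
    intro x
    rw [Finset.mul_sum, Real.exp_sum, ← Finset.prod_mul_distrib]
    rfl
  simp_rw [h0]
  rw [← MeasureTheory.integral_fintype_prod_eq_prod (ι := Fin d) (E := fun _ => ℝ)
    (f := fun j t => gauss t * Hv (D j * t + b j))]
  have hmp := (EuclideanSpace.volume_preserving_symm_measurableEquiv_toLp (Fin d)).symm
  rw [← hmp.integral_comp (MeasurableEquiv.measurableEmbedding _)]
  rfl

lemma lf_diagonal {d : ℕ} (D : Fin d → ℝ) (b : Fin d → ℝ) (j : Fin d)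
    (x : EuclideanSpace ℝ (Fin d)) :
    lf (Matrix.diagonal D) b j x = D j * x j + b j := by
  unfold lf
  congr 1
  rw [Finset.sum_eq_single j]
  · simp
  · intro i _ hij; rw [Matrix.diagonal_apply_ne _ hij, zero_mul]
  · simp

lemma sum_powerset_prod {d : ℕ} (h : Fin d → ℝ) :
    ∑ F : Finset (Fin d), ∏ j ∈ F, (h j - 1) = ∏ j, h j := by
  have := Finset.prod_add (fun j => h j - 1) (fun _ => (1:ℝ)) Finset.univ
  simp only [sub_add_cancel, Finset.prod_const_one, mul_one] at this
  rw [this, Finset.powerset_univ]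

lemma phiAll_diagonal {d : ℕ} (D : Fin d → ℝ) (hD : ∀ j, D j ≠ 0) (b : Fin d → ℝ) :
    phiAll (Matrix.diagonal D) b = (2*π) ^ (-(d:ℝ)/2) * ∏ j, G (D j) (b j) := by
  unfold phiAll
  congr 1
  simp_rw [lf_diagonal, sum_powerset_prod]
  rw [phi_factor D b]
  exact Finset.prod_congr rfl fun j _ => integral_gauss_Hv (D j) (b j) (hD j)

def chainG {d : ℕ} (D : Fin d → ℝ) (L : List (Fin d)) (b : Fin d → ℝ) : ℝ :=
  (2*π) ^ (-(d:ℝ)/2) *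
    ∏ j, (if j ∈ L then gauss (b j / D j) / |D j| else G (D j) (b j))

lemma chain_spec {d : ℕ} (D : Fin d → ℝ) (hD : ∀ j, D j ≠ 0) :
    ∀ L : List (Fin d), L.Nodup →
      IsMixedPartialOn Set.univ L (phiAll (Matrix.diagonal D)) (chainG D L) := by
  intro L
  induction L with
  | nil =>
    intro _ b _
    rw [phiAll_diagonal D hD b]
    unfold chainG
    simp
  | cons j L ih =>
    intro hnd
    have hjL : j ∉ L := (List.nodup_cons.mp hnd).1
    refine ⟨chainG D L, ih (List.nodup_cons.mp hnd).2, ?_⟩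
    intro b _
    set C : ℝ := (2*π) ^ (-(d:ℝ)/2) *
      ∏ i ∈ Finset.univ.erase j,
        (if i ∈ L then gauss (b i / D i) / |D i| else G (D i) (b i)) with hC
    have key : (fun t => chainG D L (Function.update b j t)) = fun t => C * G (D j) t := by
      funext t
      unfold chainG
      rw [← Finset.mul_prod_erase Finset.univ _ (Finset.mem_univ j)]
      rw [Function.update_self, if_neg hjL]
      have heq : (∏ i ∈ Finset.univ.erase j,
            (if i ∈ L then gauss ((Function.update b j t) i / D i) / |D i|
              else G (D i) ((Function.update b j t) i)))
          = ∏ i ∈ Finset.univ.erase j,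
            (if i ∈ L then gauss (b i / D i) / |D i| else G (D i) (b i)) := by
        refine Finset.prod_congr rfl fun i hi => ?_
        rw [Function.update_of_ne (Finset.mem_erase.mp hi).1]
      rw [heq, hC]; ring
    rw [key]
    have hG := (G_hasDerivAt (D j) (hD j) (b j)).const_mul C
    refine hG.congr_deriv ?_
    unfold chainG
    rw [← Finset.mul_prod_erase Finset.univ _ (Finset.mem_univ j),
      if_pos (List.mem_cons_self (a := j) (l := L))]
    have heq : (∏ i ∈ Finset.univ.erase j,
          (if i ∈ j :: L then gauss (b i / D i) / |D i| else G (D i) (b i)))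
        = ∏ i ∈ Finset.univ.erase j,
          (if i ∈ L then gauss (b i / D i) / |D i| else G (D i) (b i)) := by
      refine Finset.prod_congr rfl fun i hi => ?_
      have hij := (Finset.mem_erase.mp hi).1
      by_cases h : i ∈ L
      · rw [if_pos h, if_pos (List.mem_cons_of_mem _ h)]
      · rw [if_neg h, if_neg (by simp [List.mem_cons, hij, h])]
    rw [heq, hC]; ring


/-- initial values for a simplicial cone: for `ã` upper triangular
with nonzero diagonal and `D = diag(ã_{11},…,ã_{dd})`, the derivative
`g^J = (∏_{j∈J} ∂/∂b_j) φ` satisfies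
`g^J(D,0) = (2π)^{−d/2} (∏_{j∈J}|ã_{jj}|)^{−1} (π/2)^{(d−|J|)/2}`. -/
theorem stmt9 {d : ℕ} (ta : Matrix (Fin d) (Fin d) ℝ)
    (hupper : ∀ i j : Fin d, j < i → ta i j = 0)
    (hdiag : ∀ j, ta j j ≠ 0)
    (J : Finset (Fin d)) :
    ∃ g : (Fin d → ℝ) → ℝ,
      IsMixedPartialOn Set.univ (Finset.sort J (· ≤ ·))
        (phiAll (Matrix.diagonal fun j => ta j j)) g ∧
      g 0 = (2 * π) ^ (-(d : ℝ) / 2) * (∏ j ∈ J, |ta j j|)⁻¹ *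
          (π / 2) ^ (((d : ℝ) - J.card) / 2) := by
  have hD : ∀ j, (fun j => ta j j) j ≠ 0 := hdiag
  refine ⟨chainG (fun j => ta j j) (Finset.sort J (· ≤ ·)),
    chain_spec _ hD _ (Finset.sort_nodup (s := J) (r := (· ≤ ·))), ?_⟩
  unfold chainG
  simp only [Pi.zero_apply, zero_div]
  have hprod : (∏ j, (if j ∈ Finset.sort J (· ≤ ·) then gauss 0 / |ta j j|
        else G (ta j j) 0))
      = (∏ j ∈ J, |ta j j|)⁻¹ * (Real.sqrt (2*π)/2) ^ (d - J.card) := by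
    rw [← Finset.prod_mul_prod_compl J]
    congr 1
    · rw [← Finset.prod_inv_distrib]
      refine Finset.prod_congr rfl fun j hj => ?_
      rw [if_pos ((Finset.mem_sort _).mpr hj)]
      simp [gauss]
    · have hcongr : ∀ j ∈ Jᶜ, (if j ∈ Finset.sort J (· ≤ ·) then gauss 0 / |ta j j|
          else G (ta j j) 0) = Real.sqrt (2*π)/2 := by
        intro j hj
        rw [if_neg (by simpa [Finset.mem_sort] using Finset.mem_compl.mp hj), G_zero]
      rw [Finset.prod_congr rfl hcongr, Finset.prod_const, Finset.card_compl,
        Fintype.card_fin]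
  rw [hprod]
  have hc : J.card ≤ d := by simpa using Finset.card_le_univ J
  have hhalf : Real.sqrt (2*π)/2 = Real.sqrt (π/2) := by
    rw [show (π/2:ℝ) = (2*π)/(2^2) by ring, Real.sqrt_div (by positivity),
      Real.sqrt_sq (by norm_num : (0:ℝ) ≤ 2)]
  have hpow : (Real.sqrt (π/2)) ^ (d - J.card) = (π/2 : ℝ) ^ (((d:ℝ) - J.card)/2) := by
    rw [Real.sqrt_eq_rpow, ← Real.rpow_natCast ((π/2:ℝ) ^ ((1:ℝ)/2)) (d - J.card),
      ← Real.rpow_mul (by positivity)]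
    congr 1
    rw [Nat.cast_sub hc]; ring
  rw [hhalf, hpow]; ring


end
end
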